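/- The kernel K(z,w̄) := (1/(G(z)G(w̄)))·((G(z)−G(w̄))/(z−w̄) + G(z)G(w̄))² is positive semi-definite on ℂ∖ℝ: for all z₁,…,zₙ ∈ ℂ∖ℝ and c₁,…,cₙ ∈ ℂ, Σⱼₖ cⱼ c̄ₖ K(zⱼ, z̄ₖ) ≥ 0. -/

import Mathlib

open MeasureTheory Complex

section ResolventAux

lemma res_sub_ne {z : ℂ} (hz : z.im ≠ 0) (x : ℝ) : z - (x : ℂ) ≠ 0 := by
  intro h
  apply hz
  have := congrArg Complex.im h
  simpa using this

lemma res_cont {z : ℂ} (hz : z.im ≠ 0) : Continuous (fun x : ℝ => (z - (x : ℂ))⁻¹) :=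
  (continuous_const.sub Complex.continuous_ofReal).inv₀ (fun x => res_sub_ne hz x)

lemma res_norm_le {z : ℂ} (hz : z.im ≠ 0) (x : ℝ) : ‖(z - (x : ℂ))⁻¹‖ ≤ |z.im|⁻¹ := by
  rw [norm_inv]
  have h1 : |z.im| ≤ ‖z - (x : ℂ)‖ := by
    have h2 : |(z - (x : ℂ)).im| ≤ ‖z - (x : ℂ)‖ := Complex.abs_im_le_norm _
    simpa using h2
  exact inv_anti₀ (abs_pos.mpr hz) h1

lemma integrable_of_bdd {X : Type*} [MeasurableSpace X] {μ : Measure X} [IsFiniteMeasure μ]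
    {f : X → ℂ} (hm : AEStronglyMeasurable f μ) {C : ℝ} (h : ∀ x, ‖f x‖ ≤ C) :
    Integrable f μ :=
  ⟨hm, HasFiniteIntegral.of_bounded (ae_of_all μ h)⟩

lemma res_integrable (μ : Measure ℝ) [IsFiniteMeasure μ] {z : ℂ} (hz : z.im ≠ 0) :
    Integrable (fun x : ℝ => (z - (x : ℂ))⁻¹) μ :=
  integrable_of_bdd (res_cont hz).aestronglyMeasurable (res_norm_le hz)

lemma res_mul_integrable (μ : Measure ℝ) [IsFiniteMeasure μ] {z w : ℂ}
    (hz : z.im ≠ 0) (hw : w.im ≠ 0) :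
    Integrable (fun x : ℝ => (z - (x : ℂ))⁻¹ * (w - (x : ℂ))⁻¹) μ := by
  refine integrable_of_bdd ((res_cont hz).mul (res_cont hw)).aestronglyMeasurable
    (C := |z.im|⁻¹ * |w.im|⁻¹) (fun x => ?_)
  rw [norm_mul]
  exact mul_le_mul (res_norm_le hz x) (res_norm_le hw x) (norm_nonneg _)
    (inv_nonneg.mpr (abs_nonneg _))

/-- Derivative of the Cauchy transform. -/
lemma res_hasDerivAt (μ : Measure ℝ) [IsFiniteMeasure μ] {z₀ : ℂ} (hz : z₀.im ≠ 0) :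
    HasDerivAt (fun z : ℂ => ∫ x : ℝ, (z - (x : ℂ))⁻¹ ∂μ)
      (∫ x : ℝ, -((z₀ - (x : ℂ))⁻¹) ^ 2 ∂μ) z₀ := by
  set ε : ℝ := |z₀.im| / 2 with hε
  have hε0 : 0 < ε := by positivity
  have him : ∀ z ∈ Metric.ball z₀ ε, ε ≤ |z.im| := by
    intro z hzb
    have h1 : |z.im - z₀.im| ≤ ‖z - z₀‖ := by
      have := Complex.abs_im_le_norm (z - z₀)
      simpa using this
    have h2 : ‖z - z₀‖ < ε := by simpa [Metric.mem_ball, dist_eq_norm] using hzb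
    have h3 : |z₀.im| - |z.im| ≤ |z.im - z₀.im| := by
      have := abs_sub_abs_le_abs_sub z₀.im z.im
      simpa [abs_sub_comm] using this
    have : |z₀.im| - |z.im| < ε := lt_of_le_of_lt (h3.trans h1) h2
    have : |z₀.im| - ε < |z.im| := by linarith
    linarith [this, hε ▸ (by linarith : |z₀.im| - ε = ε)]
  have him' : ∀ z ∈ Metric.ball z₀ ε, z.im ≠ 0 := by
    intro z hzb
    have := him z hzb
    intro h0
    rw [h0] at this
    simp at this
    linarith
  refine (hasDerivAt_integral_of_dominated_loc_of_deriv_le (F := fun (z : ℂ) (x : ℝ) => (z - (x : ℂ))⁻¹)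
    (F' := fun (z : ℂ) (x : ℝ) => -((z - (x : ℂ))⁻¹) ^ 2) (bound := fun _ => (ε⁻¹) ^ 2) (Metric.ball_mem_nhds z₀ hε0) ?_ ?_ ?_ ?_ ?_ ?_).2
  · refine Filter.Eventually.of_forall (fun z => ?_)
    exact ((measurable_const.sub Complex.measurable_ofReal).inv).aestronglyMeasurable
  · exact res_integrable μ hz
  · exact (((res_cont hz).pow 2).neg).aestronglyMeasurable
  · refine ae_of_all μ (fun x z hzb => ?_)
    have h1 : ‖(z - (x : ℂ))⁻¹‖ ≤ |z.im|⁻¹ := res_norm_le (him' z hzb) x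
    have h2 : |z.im|⁻¹ ≤ ε⁻¹ := inv_anti₀ hε0 (him z hzb)
    have h3 : ‖(z - (x : ℂ))⁻¹‖ ≤ ε⁻¹ := h1.trans h2
    calc ‖-((z - (x : ℂ))⁻¹) ^ 2‖ = ‖(z - (x : ℂ))⁻¹‖ ^ 2 := by
          rw [norm_neg, norm_pow]
      _ ≤ (ε⁻¹) ^ 2 := by
          exact pow_le_pow_left₀ (norm_nonneg _) h3 2
  · exact integrable_const _
  · refine ae_of_all μ (fun x z hzb => ?_)
    have hne : z - (x : ℂ) ≠ 0 := res_sub_ne (him' z hzb) x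
    have h := ((hasDerivAt_id z).sub_const (x : ℂ)).inv hne
    refine h.congr_deriv ?_
    simp only [id, neg_div, one_div, inv_pow]


lemma G_conj_integral (μ : Measure ℝ) [IsFiniteMeasure μ] (w : ℂ) :
    (∫ y : ℝ, ((starRingEnd ℂ w) - (y : ℂ))⁻¹ ∂μ)
      = starRingEnd ℂ (∫ y : ℝ, (w - (y : ℂ))⁻¹ ∂μ) := by
  rw [← integral_conj]
  congr 1
  funext y
  rw [map_inv₀, map_sub, Complex.conj_ofReal]

/-- Covariance identity for resolvents. -/
lemma cov_eq (μ : Measure ℝ) [IsProbabilityMeasure μ] {z w : ℂ}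
    (hz : z.im ≠ 0) (hw : w.im ≠ 0) :
    (∫ x : ℝ, ((z - (x : ℂ))⁻¹ - ∫ y : ℝ, (z - (y : ℂ))⁻¹ ∂μ)
        * starRingEnd ℂ ((w - (x : ℂ))⁻¹ - ∫ y : ℝ, (w - (y : ℂ))⁻¹ ∂μ) ∂μ)
    = (∫ x : ℝ, (z - (x : ℂ))⁻¹ * ((starRingEnd ℂ w) - (x : ℂ))⁻¹ ∂μ)
      - (∫ x : ℝ, (z - (x : ℂ))⁻¹ ∂μ) * (∫ x : ℝ, ((starRingEnd ℂ w) - (x : ℂ))⁻¹ ∂μ) := by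
  have hcw : (starRingEnd ℂ w).im ≠ 0 := by
    simpa using neg_ne_zero.mpr hw
  have hpt : ∀ x : ℝ,
      ((z - (x : ℂ))⁻¹ - ∫ y : ℝ, (z - (y : ℂ))⁻¹ ∂μ)
        * starRingEnd ℂ ((w - (x : ℂ))⁻¹ - ∫ y : ℝ, (w - (y : ℂ))⁻¹ ∂μ)
      = (z - (x : ℂ))⁻¹ * ((starRingEnd ℂ w) - (x : ℂ))⁻¹
        - ((∫ y : ℝ, (z - (y : ℂ))⁻¹ ∂μ) * ((starRingEnd ℂ w) - (x : ℂ))⁻¹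
           + (∫ y : ℝ, ((starRingEnd ℂ w) - (y : ℂ))⁻¹ ∂μ) * (z - (x : ℂ))⁻¹
           - (∫ y : ℝ, (z - (y : ℂ))⁻¹ ∂μ) * (∫ y : ℝ, ((starRingEnd ℂ w) - (y : ℂ))⁻¹ ∂μ)) := by
    intro x
    rw [map_sub, map_inv₀, map_sub, Complex.conj_ofReal, ← G_conj_integral μ w]
    ring
  have i1 : Integrable (fun x : ℝ => (z - (x : ℂ))⁻¹ * ((starRingEnd ℂ w) - (x : ℂ))⁻¹) μ :=
    res_mul_integrable μ hz hcw
  have i2 : Integrable (fun x : ℝ =>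
      (∫ y : ℝ, (z - (y : ℂ))⁻¹ ∂μ) * ((starRingEnd ℂ w) - (x : ℂ))⁻¹
        + (∫ y : ℝ, ((starRingEnd ℂ w) - (y : ℂ))⁻¹ ∂μ) * (z - (x : ℂ))⁻¹
        - (∫ y : ℝ, (z - (y : ℂ))⁻¹ ∂μ) * (∫ y : ℝ, ((starRingEnd ℂ w) - (y : ℂ))⁻¹ ∂μ)) μ :=
    (((res_integrable μ hcw).const_mul _).add ((res_integrable μ hz).const_mul _)).sub
      (integrable_const _)
  calc (∫ x : ℝ, ((z - (x : ℂ))⁻¹ - ∫ y : ℝ, (z - (y : ℂ))⁻¹ ∂μ)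
        * starRingEnd ℂ ((w - (x : ℂ))⁻¹ - ∫ y : ℝ, (w - (y : ℂ))⁻¹ ∂μ) ∂μ)
      = ∫ x : ℝ, ((z - (x : ℂ))⁻¹ * ((starRingEnd ℂ w) - (x : ℂ))⁻¹
        - ((∫ y : ℝ, (z - (y : ℂ))⁻¹ ∂μ) * ((starRingEnd ℂ w) - (x : ℂ))⁻¹
           + (∫ y : ℝ, ((starRingEnd ℂ w) - (y : ℂ))⁻¹ ∂μ) * (z - (x : ℂ))⁻¹
           - (∫ y : ℝ, (z - (y : ℂ))⁻¹ ∂μ) * (∫ y : ℝ, ((starRingEnd ℂ w) - (y : ℂ))⁻¹ ∂μ))) ∂μ := by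
        exact integral_congr_ae (ae_of_all μ hpt)
    _ = (∫ x : ℝ, (z - (x : ℂ))⁻¹ * ((starRingEnd ℂ w) - (x : ℂ))⁻¹ ∂μ)
        - ∫ x : ℝ, ((∫ y : ℝ, (z - (y : ℂ))⁻¹ ∂μ) * ((starRingEnd ℂ w) - (x : ℂ))⁻¹
           + (∫ y : ℝ, ((starRingEnd ℂ w) - (y : ℂ))⁻¹ ∂μ) * (z - (x : ℂ))⁻¹
           - (∫ y : ℝ, (z - (y : ℂ))⁻¹ ∂μ) * (∫ y : ℝ, ((starRingEnd ℂ w) - (y : ℂ))⁻¹ ∂μ)) ∂μ :=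
        integral_sub i1 i2
    _ = (∫ x : ℝ, (z - (x : ℂ))⁻¹ * ((starRingEnd ℂ w) - (x : ℂ))⁻¹ ∂μ)
      - (∫ x : ℝ, (z - (x : ℂ))⁻¹ ∂μ) * (∫ x : ℝ, ((starRingEnd ℂ w) - (x : ℂ))⁻¹ ∂μ) := by
        have ha : Integrable (fun x : ℝ =>
            (∫ y : ℝ, (z - (y : ℂ))⁻¹ ∂μ) * ((starRingEnd ℂ w) - (x : ℂ))⁻¹) μ :=
          (res_integrable μ hcw).const_mul _
        have hb : Integrable (fun x : ℝ =>
            (∫ y : ℝ, ((starRingEnd ℂ w) - (y : ℂ))⁻¹ ∂μ) * (z - (x : ℂ))⁻¹) μ :=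
          (res_integrable μ hz).const_mul _
        have hab : Integrable (fun x : ℝ =>
            (∫ y : ℝ, (z - (y : ℂ))⁻¹ ∂μ) * ((starRingEnd ℂ w) - (x : ℂ))⁻¹
              + (∫ y : ℝ, ((starRingEnd ℂ w) - (y : ℂ))⁻¹ ∂μ) * (z - (x : ℂ))⁻¹) μ := ha.add hb
        have hs := integral_sub hab (integrable_const
          ((∫ y : ℝ, (z - (y : ℂ))⁻¹ ∂μ) * (∫ y : ℝ, ((starRingEnd ℂ w) - (y : ℂ))⁻¹ ∂μ)))
        have hadd := integral_add ha hb
        rw [hs, hadd, integral_const_mul, integral_const_mul, integral_const]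
        simp [measure_univ]
        ring

/-- Positivity of Hadamard squares of Gram kernels times a rank one kernel. -/
lemma gram_sq_nonneg {n : ℕ} (ν : Measure ℝ) [IsProbabilityMeasure ν]
    (b : Fin n → ℂ) (g : Fin n → ℝ → ℂ) (hgc : ∀ j, Continuous (g j))
    (B : Fin n → ℝ) (hB : ∀ j x, ‖g j x‖ ≤ B j) :
    0 ≤ (∑ j : Fin n, ∑ k : Fin n, b j * starRingEnd ℂ (b k)
          * (∫ x : ℝ, g j x * starRingEnd ℂ (g k x) ∂ν) ^ 2).re
    ∧ (∑ j : Fin n, ∑ k : Fin n, b j * starRingEnd ℂ (b k)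
          * (∫ x : ℝ, g j x * starRingEnd ℂ (g k x) ∂ν) ^ 2).im = 0 := by
  have hB0 : ∀ j, 0 ≤ B j := fun j => (norm_nonneg _).trans (hB j 0)
  set F : ℝ × ℝ → ℂ := fun p => ∑ j : Fin n, b j * g j p.1 * g j p.2 with hF
  have hconjc : Continuous (starRingEnd ℂ) := Complex.continuous_conj
  have hint : ∀ j k : Fin n, Integrable (fun p : ℝ × ℝ =>
      b j * starRingEnd ℂ (b k) * ((g j p.1 * starRingEnd ℂ (g k p.1))
        * (g j p.2 * starRingEnd ℂ (g k p.2)))) (ν.prod ν) := by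
    intro j k
    refine integrable_of_bdd (Continuous.aestronglyMeasurable ?_)
      (C := ‖b j * starRingEnd ℂ (b k)‖ * (B j * B k * (B j * B k))) (fun p => ?_)
    · exact continuous_const.mul
        ((((hgc j).comp continuous_fst).mul
            (hconjc.comp ((hgc k).comp continuous_fst))).mul
          (((hgc j).comp continuous_snd).mul
            (hconjc.comp ((hgc k).comp continuous_snd))))
    · rw [norm_mul]
      refine mul_le_mul_of_nonneg_left ?_ (norm_nonneg _)
      rw [norm_mul, norm_mul, norm_mul, RCLike.norm_conj, RCLike.norm_conj]
      have h1 : ‖g j p.1‖ * ‖g k p.1‖ ≤ B j * B k :=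
        mul_le_mul (hB j p.1) (hB k p.1) (norm_nonneg _) (hB0 j)
      have h2 : ‖g j p.2‖ * ‖g k p.2‖ ≤ B j * B k :=
        mul_le_mul (hB j p.2) (hB k p.2) (norm_nonneg _) (hB0 j)
      exact mul_le_mul h1 h2 (mul_nonneg (norm_nonneg _) (norm_nonneg _))
        (mul_nonneg (hB0 j) (hB0 k))
  have hterm : ∀ j k : Fin n, b j * starRingEnd ℂ (b k)
        * (∫ x : ℝ, g j x * starRingEnd ℂ (g k x) ∂ν) ^ 2
      = ∫ p : ℝ × ℝ, b j * starRingEnd ℂ (b k) * ((g j p.1 * starRingEnd ℂ (g k p.1))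
          * (g j p.2 * starRingEnd ℂ (g k p.2))) ∂(ν.prod ν) := by
    intro j k
    rw [sq, ← integral_prod_mul (fun x : ℝ => g j x * starRingEnd ℂ (g k x))
        (fun x : ℝ => g j x * starRingEnd ℂ (g k x)), ← integral_const_mul]
  have hswap : (∑ j : Fin n, ∑ k : Fin n, b j * starRingEnd ℂ (b k)
        * (∫ x : ℝ, g j x * starRingEnd ℂ (g k x) ∂ν) ^ 2)
      = ∫ p : ℝ × ℝ, ∑ j : Fin n, ∑ k : Fin n,
          b j * starRingEnd ℂ (b k) * ((g j p.1 * starRingEnd ℂ (g k p.1))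
            * (g j p.2 * starRingEnd ℂ (g k p.2))) ∂(ν.prod ν) := by
    have h1 : ∀ j : Fin n, (∑ k : Fin n, b j * starRingEnd ℂ (b k)
          * (∫ x : ℝ, g j x * starRingEnd ℂ (g k x) ∂ν) ^ 2)
        = ∫ p : ℝ × ℝ, ∑ k : Fin n,
            b j * starRingEnd ℂ (b k) * ((g j p.1 * starRingEnd ℂ (g k p.1))
              * (g j p.2 * starRingEnd ℂ (g k p.2))) ∂(ν.prod ν) := by
      intro j
      calc (∑ k : Fin n, b j * starRingEnd ℂ (b k)
            * (∫ x : ℝ, g j x * starRingEnd ℂ (g k x) ∂ν) ^ 2)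
          = ∑ k : Fin n, ∫ p : ℝ × ℝ,
              b j * starRingEnd ℂ (b k) * ((g j p.1 * starRingEnd ℂ (g k p.1))
                * (g j p.2 * starRingEnd ℂ (g k p.2))) ∂(ν.prod ν) :=
            Finset.sum_congr rfl (fun k _ => hterm j k)
        _ = _ := (integral_finset_sum _ (fun k _ => hint j k)).symm
    calc (∑ j : Fin n, ∑ k : Fin n, b j * starRingEnd ℂ (b k)
          * (∫ x : ℝ, g j x * starRingEnd ℂ (g k x) ∂ν) ^ 2)
        = ∑ j : Fin n, ∫ p : ℝ × ℝ, ∑ k : Fin n,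
            b j * starRingEnd ℂ (b k) * ((g j p.1 * starRingEnd ℂ (g k p.1))
              * (g j p.2 * starRingEnd ℂ (g k p.2))) ∂(ν.prod ν) :=
          Finset.sum_congr rfl (fun j _ => h1 j)
      _ = _ := (integral_finset_sum _
          (fun j _ => integrable_finset_sum _ (fun k _ => hint j k))).symm
  have hpt : ∀ p : ℝ × ℝ, (∑ j : Fin n, ∑ k : Fin n,
        b j * starRingEnd ℂ (b k) * ((g j p.1 * starRingEnd ℂ (g k p.1))
          * (g j p.2 * starRingEnd ℂ (g k p.2))))
      = ((Complex.normSq (F p) : ℝ) : ℂ) := by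
    intro p
    rw [← Complex.mul_conj, hF]
    simp only [map_sum, Finset.sum_mul_sum, map_mul]
    refine Finset.sum_congr rfl (fun j _ => Finset.sum_congr rfl (fun k _ => ?_))
    ring
  have hfinal : (∑ j : Fin n, ∑ k : Fin n, b j * starRingEnd ℂ (b k)
        * (∫ x : ℝ, g j x * starRingEnd ℂ (g k x) ∂ν) ^ 2)
      = ((∫ p : ℝ × ℝ, Complex.normSq (F p) ∂(ν.prod ν) : ℝ) : ℂ) := by
    rw [hswap, integral_congr_ae (ae_of_all _ hpt)]
    exact integral_ofReal
  rw [hfinal]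
  refine ⟨?_, ?_⟩
  · rw [Complex.ofReal_re]
    exact integral_nonneg (fun p => Complex.normSq_nonneg _)
  · exact Complex.ofReal_im _


/-- Unified formula for the kernel on nonreal points. -/
lemma ker_eq (μ : Measure ℝ) [IsProbabilityMeasure μ] (G : ℂ → ℂ)
    (hG : ∀ z : ℂ, G z = ∫ x : ℝ, (z - (x : ℂ))⁻¹ ∂μ)
    (ker : ℂ → ℂ → ℂ)
    (hker : ∀ z w : ℂ, ker z w =
      if z = w then (G z * G z)⁻¹ * (deriv G z + G z * G z) ^ 2
      else (G z * G w)⁻¹ * ((G z - G w) / (z - w) + G z * G w) ^ 2)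
    {z w : ℂ} (hz : z.im ≠ 0) (hw : w.im ≠ 0) :
    ker z w = (G z * G w)⁻¹
      * ((∫ x : ℝ, (z - (x : ℂ))⁻¹ * (w - (x : ℂ))⁻¹ ∂μ) - G z * G w) ^ 2 := by
  rw [hker]
  by_cases h : z = w
  · subst h
    rw [if_pos rfl]
    have hGfun : G = fun u : ℂ => ∫ x : ℝ, (u - (x : ℂ))⁻¹ ∂μ := funext hG
    have hd : deriv G z = ∫ x : ℝ, -((z - (x : ℂ))⁻¹) ^ 2 ∂μ := by
      rw [hGfun]
      exact (res_hasDerivAt μ hz).deriv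
    have hd2 : deriv G z = -∫ x : ℝ, (z - (x : ℂ))⁻¹ * (z - (x : ℂ))⁻¹ ∂μ := by
      rw [hd, ← integral_neg]
      exact integral_congr_ae (ae_of_all μ (fun x => by ring))
    rw [hd2]
    ring
  · rw [if_neg h]
    have hzw : z - w ≠ 0 := sub_ne_zero.mpr h
    have hsub : G z - G w = (w - z) * ∫ x : ℝ, (z - (x : ℂ))⁻¹ * (w - (x : ℂ))⁻¹ ∂μ := by
      rw [hG z, hG w, ← integral_sub (res_integrable μ hz) (res_integrable μ hw),
        ← integral_const_mul]
      refine integral_congr_ae (ae_of_all μ (fun x => ?_))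
      have h1 : z - (x : ℂ) ≠ 0 := res_sub_ne hz x
      have h2 : w - (x : ℂ) ≠ 0 := res_sub_ne hw x
      field_simp
      ring
    have hq : (G z - G w) / (z - w) = -∫ x : ℝ, (z - (x : ℂ))⁻¹ * (w - (x : ℂ))⁻¹ ∂μ := by
      rw [hsub, div_eq_iff hzw]
      ring
    rw [hq]
    ring

end ResolventAux

/-- Positive semi-definiteness of the kernel
`K(z,w̄) = (G(z)G(w̄))⁻¹ ((G(z)−G(w̄))/(z−w̄) + G(z)G(w̄))²` on `ℂ ∖ ℝ`,
with the removable singularity at `z = w̄` interpreted via `G'`. -/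
theorem resolvent_kernel_posSemidef
    (μ : Measure ℝ) [IsProbabilityMeasure μ]
    (K : Set ℝ) (hK : IsCompact K) (hμK : μ Kᶜ = 0)
    (G : ℂ → ℂ) (hG : ∀ z : ℂ, G z = ∫ x : ℝ, (z - (x : ℂ))⁻¹ ∂μ)
    (ker : ℂ → ℂ → ℂ)
    (hker : ∀ z w : ℂ, ker z w =
      if z = w then (G z * G z)⁻¹ * (deriv G z + G z * G z) ^ 2
      else (G z * G w)⁻¹ * ((G z - G w) / (z - w) + G z * G w) ^ 2) :
    ∀ (n : ℕ) (z : Fin n → ℂ) (c : Fin n → ℂ), (∀ j, (z j).im ≠ 0) →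
      0 ≤ (∑ j : Fin n, ∑ k : Fin n,
            c j * starRingEnd ℂ (c k) * ker (z j) (starRingEnd ℂ (z k))).re
      ∧ (∑ j : Fin n, ∑ k : Fin n,
            c j * starRingEnd ℂ (c k) * ker (z j) (starRingEnd ℂ (z k))).im = 0 := by
  intro n z c hz
  have hzc : ∀ k, ((starRingEnd ℂ) (z k)).im ≠ 0 := fun k => by
    simpa using neg_ne_zero.mpr (hz k)
  have hterm : ∀ j k : Fin n,
      c j * starRingEnd ℂ (c k) * ker (z j) (starRingEnd ℂ (z k))
      = (c j * (G (z j))⁻¹) * starRingEnd ℂ (c k * (G (z k))⁻¹)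
        * (∫ x : ℝ, (((z j) - (x : ℂ))⁻¹ - ∫ y : ℝ, ((z j) - (y : ℂ))⁻¹ ∂μ)
            * starRingEnd ℂ (((z k) - (x : ℂ))⁻¹ - ∫ y : ℝ, ((z k) - (y : ℂ))⁻¹ ∂μ) ∂μ) ^ 2 := by
    intro j k
    rw [ker_eq μ G hG ker hker (hz j) (hzc k), cov_eq μ (hz j) (hz k),
      hG (z j), hG (starRingEnd ℂ (z k)), hG (z k), G_conj_integral μ (z k),
      mul_inv, map_mul, map_inv₀]
    ring
  have hmain := gram_sq_nonneg μ (fun j => c j * (G (z j))⁻¹)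
      (fun j x => ((z j) - (x : ℂ))⁻¹ - ∫ y : ℝ, ((z j) - (y : ℂ))⁻¹ ∂μ)
      (fun j => (res_cont (hz j)).sub continuous_const)
      (fun j => |(z j).im|⁻¹ + ‖∫ y : ℝ, ((z j) - (y : ℂ))⁻¹ ∂μ‖)
      (fun j x => (norm_sub_le _ _).trans (add_le_add (res_norm_le (hz j) x) le_rfl))
  have hsum : (∑ j : Fin n, ∑ k : Fin n,
        c j * starRingEnd ℂ (c k) * ker (z j) (starRingEnd ℂ (z k)))
      = ∑ j : Fin n, ∑ k : Fin n, (c j * (G (z j))⁻¹) * starRingEnd ℂ (c k * (G (z k))⁻¹)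
        * (∫ x : ℝ, (((z j) - (x : ℂ))⁻¹ - ∫ y : ℝ, ((z j) - (y : ℂ))⁻¹ ∂μ)
            * starRingEnd ℂ (((z k) - (x : ℂ))⁻¹ - ∫ y : ℝ, ((z k) - (y : ℂ))⁻¹ ∂μ) ∂μ) ^ 2 :=
    Finset.sum_congr rfl (fun j _ => Finset.sum_congr rfl (fun k _ => hterm j k))
  rw [hsum]
  exact hmain
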